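/- Let Ω ⊆ ℝⁿ be open, satisfying the ε-ball condition, and let x ∈ ∂Ω. If y ∈ B_ε(x) ∩ Ω and z ∈ ∂Ω satisfies ‖z − y‖ = d(y, ∂Ω), then y = z − d(y, ∂Ω) · d_z. -/
import Mathlib


open Metric
open scoped RealInnerProductSpace

lemma aux_cross {E : Type*} [NormedAddCommGroup E] [NormedSpace ℝ E] {Ω : Set E}
    (hΩ : IsOpen Ω) {y q : E} (hy : y ∈ Ω) (hq : q ∉ closure Ω) :
    Metric.infDist y (frontier Ω) ≤ dist y q := by
  have hseg : IsPreconnected (segment ℝ y q) := (convex_segment y q).isPreconnected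
  by_cases hfr : (segment ℝ y q ∩ frontier Ω).Nonempty
  · obtain ⟨w, hws, hwf⟩ := hfr
    calc Metric.infDist y (frontier Ω) ≤ dist y w := Metric.infDist_le_dist_of_mem hwf
    _ ≤ dist y q := by
        linarith [dist_add_dist_of_mem_segment hws, dist_nonneg (x := w) (y := q)]
  · exfalso
    have hsub : segment ℝ y q ⊆ Ω ∪ (closure Ω)ᶜ := by
      intro p hp
      by_cases hpΩ : p ∈ Ω
      · exact Or.inl hpΩ
      · by_cases hpc : p ∈ closure Ω
        · exact absurd ⟨p, hp, hpc, by rwa [hΩ.interior_eq]⟩ hfr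
        · exact Or.inr hpc
    have hdisj : Disjoint Ω (closure Ω)ᶜ :=
      Set.disjoint_compl_right_iff_subset.mpr subset_closure
    rcases hseg.subset_or_subset hΩ isClosed_closure.isOpen_compl hdisj hsub with h | h
    · exact hq (subset_closure (h (right_mem_segment ℝ y q)))
    · exact (h (left_mem_segment ℝ y q)) (subset_closure hy)

/-- If `Ω` satisfies the ε-ball condition, `x ∈ ∂Ω`, `y ∈ B_ε(x) ∩ Ω`, and `z ∈ ∂Ω` realizes
the distance from `y` to `∂Ω`, then `y = z − d(y, ∂Ω) · d_z`. -/
theorem stmt_4 {n : ℕ} (hn : 2 ≤ n) (ε : ℝ) (hε : 0 < ε)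
    (Ω : Set (EuclideanSpace ℝ (Fin n))) (hΩ : IsOpen Ω)
    (hball : ∀ w ∈ frontier Ω, ∃ d : EuclideanSpace ℝ (Fin n), ‖d‖ = 1 ∧
      ball (w - ε • d) ε ⊆ Ω ∧ ball (w + ε • d) ε ⊆ (closure Ω)ᶜ)
    (x : EuclideanSpace ℝ (Fin n)) (hx : x ∈ frontier Ω)
    (y : EuclideanSpace ℝ (Fin n)) (hy : y ∈ ball x ε ∩ Ω)
    (z : EuclideanSpace ℝ (Fin n)) (hz : z ∈ frontier Ω)
    (hzy : dist y z = Metric.infDist y (frontier Ω))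
    (dz : EuclideanSpace ℝ (Fin n)) (hdz : ‖dz‖ = 1)
    (hz1 : ball (z - ε • dz) ε ⊆ Ω) (hz2 : ball (z + ε • dz) ε ⊆ (closure Ω)ᶜ) :
    y = z - Metric.infDist y (frontier Ω) • dz := by
  obtain ⟨hyx, hyΩ⟩ := hy
  set d : ℝ := Metric.infDist y (frontier Ω) with hd
  have hd0 : 0 ≤ d := Metric.infDist_nonneg
  have hdε : d < ε :=
    lt_of_le_of_lt (Metric.infDist_le_dist_of_mem hx) (mem_ball.mp hyx)
  set c : EuclideanSpace ℝ (Fin n) := z + ε • dz with hc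
  have hyc : y ∈ closure Ω := subset_closure hyΩ
  set L : ℝ := dist y c with hL
  have hLε : ε ≤ L := by
    by_contra h
    push_neg at h
    exact hz2 (mem_ball.mpr h) hyc
  have hL0 : 0 < L := lt_of_lt_of_le hε hLε
  -- Step A: L ≥ ε + d
  have hA : ε + d ≤ L := by
    by_contra h
    push_neg at h
    set δ : ℝ := (L - d + ε) / 2 with hδ
    have hδ0 : 0 < δ := by
      have : d < L := lt_of_lt_of_le hdε hLε
      simp only [hδ]; linarith
    have hδε : δ < ε := by simp only [hδ]; linarith
    set q : EuclideanSpace ℝ (Fin n) := y + ((L - δ) / L) • (c - y) with hq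
    have hqc : dist q c = δ := by
      have : q - c = (δ / L) • (y - c) := by
        rw [hq]
        have : ((L - δ) / L) = 1 - δ / L := by field_simp
        rw [this]
        module
      rw [dist_eq_norm, this, norm_smul, ← dist_eq_norm, ← hL]
      rw [Real.norm_eq_abs, abs_div, abs_of_pos hδ0, abs_of_pos hL0]
      field_simp
    have hyq : dist y q = L - δ := by
      have : y - q = -(((L - δ) / L) • (c - y)) := by rw [hq]; module
      rw [dist_eq_norm, this, norm_neg, norm_smul, Real.norm_eq_abs, abs_div,
        abs_of_pos hL0, abs_of_nonneg (by linarith [hδε, hLε] : (0:ℝ) ≤ L - δ)]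
      have : ‖c - y‖ = L := by rw [hL, dist_eq_norm, norm_sub_rev]
      rw [this]
      field_simp
    have hqball : q ∈ ball c ε := mem_ball.mpr (by rw [hqc]; exact hδε)
    have hqnc : q ∉ closure Ω := hz2 hqball
    have := aux_cross hΩ hyΩ hqnc
    rw [← hd, hyq] at this
    simp only [hδ] at this
    linarith
  -- Step B: inner product computation
  have hv : ‖y - z‖ = d := by rw [← dist_eq_norm]; exact hzy
  have hLnorm : L = ‖(y - z) - ε • dz‖ := by
    rw [hL, hc, dist_eq_norm]
    congr 1
    abel
  have hip : ⟪y - z, dz⟫ = -d := by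
    have hle : ⟪y - z, dz⟫ ≤ -d := by
      have hsq : (ε + d) ^ 2 ≤ L ^ 2 := by
        apply pow_le_pow_left₀ (by linarith) hA
      rw [hLnorm] at hsq
      have hexp : ‖(y - z) - ε • dz‖ ^ 2
          = ‖y - z‖ ^ 2 - 2 * (ε * ⟪y - z, dz⟫) + ‖ε • dz‖ ^ 2 := by
        rw [norm_sub_sq_real, real_inner_smul_right]
      rw [hexp, hv, norm_smul, Real.norm_eq_abs, abs_of_pos hε, hdz] at hsq
      nlinarith
    have hge : -d ≤ ⟪y - z, dz⟫ := by
      have := abs_real_inner_le_norm (y - z) dz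
      rw [hv, hdz, mul_one] at this
      linarith [abs_le.mp this]
    linarith
  have hzero : ‖(y - z) + d • dz‖ ^ 2 = 0 := by
    rw [norm_add_sq_real, real_inner_smul_right, hip, hv, norm_smul,
      Real.norm_eq_abs, abs_of_nonneg hd0, hdz]
    ring
  have hzero' : (y - z) + d • dz = 0 := by
    rwa [pow_eq_zero_iff (by norm_num : 2 ≠ 0), norm_eq_zero] at hzero
  have : y = z - d • dz := by
    have := hzero'
    rw [eq_sub_iff_add_eq]
    linear_combination (norm := module) this
  exact this
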